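/- Let q ≥ 1, n ≥ 1, and let f, g be formal power series in q variables over ℝ with ord g = m ∈ ℕ and g^n = f. Then for every multi-index c with |c| = m·n + 1, one has f_c = n · Σ_{b} g_b · (Σ ∏_{i=1}^{n-1} g_{c^i}), where the outer sum extends over all multi-indices b with |b| = m+1 and b ≤ c componentwise, and the inner sum extends over all (n−1)-tuples (c^1, …, c^{n-1}) of multi-indices satisfying |c^i| = m for every i and c^1 + … + c^{n-1} = c − b. -/

import Mathlib

open Finset MvPowerSeries

/-- skip over i₀ -/
def skp (i₀ i : ℕ) : ℕ := if i < i₀ then i else i + 1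

lemma skp_ne (i₀ i : ℕ) : skp i₀ i ≠ i₀ := by
  unfold skp; split <;> omega

lemma skp_inj (i₀ : ℕ) : Function.Injective (skp i₀) := by
  intro a b; unfold skp; split <;> split <;> omega

lemma skp_lt {n i₀ i : ℕ} (hi₀ : i₀ < n) (hi : i < n - 1) : skp i₀ i < n := by
  unfold skp; split <;> omega

lemma skp_surj {n i₀ j : ℕ} (hi₀ : i₀ < n) (hj : j < n) (hne : j ≠ i₀) :
    ∃ i, i < n - 1 ∧ skp i₀ i = j := by
  rcases Nat.lt_or_ge j i₀ with h | h
  · exact ⟨j, by omega, by unfold skp; simp [h]⟩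
  · exact ⟨j - 1, by omega, by unfold skp; rw [if_neg (by omega)]; omega⟩

lemma degree_finsum {ι : Type*} {σ : Type*} (s : Finset ι) (F : ι → (σ →₀ ℕ)) :
    Finsupp.degree (∑ j ∈ s, F j) = ∑ j ∈ s, Finsupp.degree (F j) := by
  simp [Finsupp.degree_eq_weight_one, map_sum]

lemma sum_nat_eq_one {ι : Type*} {s : Finset ι} {f : ι → ℕ} (h : ∑ j ∈ s, f j = 1) :
    ∃ i ∈ s, f i = 1 ∧ ∀ j ∈ s, j ≠ i → f j = 0 := by
  classical
  have : ∃ i ∈ s, f i ≠ 0 := by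
    by_contra hc
    push_neg at hc
    rw [Finset.sum_eq_zero hc] at h; omega
  obtain ⟨i, hi, hfi⟩ := this
  have hsplit := Finset.add_sum_erase s f hi
  rw [h] at hsplit
  have h1 : f i = 1 ∧ ∑ j ∈ s.erase i, f j = 0 := by omega
  refine ⟨i, hi, h1.1, fun j hj hji => ?_⟩
  have := Finset.sum_eq_zero_iff.mp h1.2 j (Finset.mem_erase.mpr ⟨hji, hj⟩)
  exact this

lemma prod_skp {M : Type*} [CommMonoid M] {n i₀ : ℕ} (hi₀ : i₀ < n) (F : ℕ → M) :
    ∏ j ∈ (range n).erase i₀, F j = ∏ k : Fin (n - 1), F (skp i₀ ↑k) := by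
  rw [Fin.prod_univ_eq_prod_range (fun k => F (skp i₀ k)) (n-1)]
  symm
  apply Finset.prod_nbij (i := fun k => skp i₀ k)
  · intro a ha
    simp only [mem_range] at ha
    simp only [mem_erase, mem_range]
    exact ⟨skp_ne i₀ a, skp_lt hi₀ ha⟩
  · exact fun a _ b _ h => skp_inj i₀ h
  · intro b hb
    simp only [Finset.mem_coe, mem_erase, mem_range] at hb
    obtain ⟨i, hi, hski⟩ := skp_surj hi₀ hb.2 hb.1
    refine ⟨i, ?_, hski⟩
    simp only [Finset.coe_range, Set.mem_Iio]
    omega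
  · exact fun a _ => rfl

lemma sum_skp {M : Type*} [AddCommMonoid M] {n i₀ : ℕ} (hi₀ : i₀ < n) (F : ℕ → M) :
    ∑ j ∈ (range n).erase i₀, F j = ∑ k : Fin (n - 1), F (skp i₀ ↑k) :=
  prod_skp (M := Multiplicative M) hi₀ F

noncomputable def psi {q n : ℕ} (i₀ : ℕ) (b : Fin q →₀ ℕ) (d : Fin (n - 1) → (Fin q →₀ ℕ)) :
    ℕ →₀ (Fin q →₀ ℕ) :=
  Finsupp.single i₀ b + ∑ k : Fin (n - 1), Finsupp.single (skp i₀ ↑k) (d k)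

lemma psi_apply_self {q n : ℕ} (i₀ : ℕ) (b : Fin q →₀ ℕ) (d : Fin (n - 1) → (Fin q →₀ ℕ)) :
    psi i₀ b d i₀ = b := by
  rw [psi, Finsupp.add_apply, Finsupp.single_eq_same, Finsupp.finset_sum_apply]
  rw [Finset.sum_eq_zero, add_zero]
  intro k _
  exact Finsupp.single_eq_of_ne' (skp_ne i₀ k)

lemma psi_apply_skp {q n : ℕ} (i₀ : ℕ) (b : Fin q →₀ ℕ) (d : Fin (n - 1) → (Fin q →₀ ℕ))
    (k : Fin (n - 1)) : psi i₀ b d (skp i₀ ↑k) = d k := by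
  rw [psi, Finsupp.add_apply, Finsupp.single_eq_of_ne' (Ne.symm (skp_ne i₀ k)),
    Finsupp.finset_sum_apply, zero_add]
  rw [Finset.sum_eq_single k]
  · exact Finsupp.single_eq_same
  · intro k' _ hk'
    exact Finsupp.single_eq_of_ne' (fun h => hk' (Fin.val_injective (skp_inj i₀ h)))
  · exact fun h => absurd (Finset.mem_univ k) h

lemma psi_apply_other {q n : ℕ} (i₀ : ℕ) (b : Fin q →₀ ℕ) (d : Fin (n - 1) → (Fin q →₀ ℕ))
    {j : ℕ} (h1 : j ≠ i₀) (h2 : ∀ k : Fin (n - 1), skp i₀ ↑k ≠ j) : psi i₀ b d j = 0 := by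
  rw [psi, Finsupp.add_apply, Finsupp.single_eq_of_ne' (Ne.symm h1),
    Finsupp.finset_sum_apply, zero_add]
  exact Finset.sum_eq_zero fun k _ => Finsupp.single_eq_of_ne' (h2 k)

section
variable {q n m : ℕ}

open Classical in
lemma key (g : MvPowerSeries (Fin q) ℝ) (c : Fin q →₀ ℕ) {i₀ : ℕ} (hi₀ : i₀ < n) :
    ∑ l ∈ (Finset.finsuppAntidiag (range n) c).filter
        (fun l => (l i₀).degree = m + 1 ∧ ∀ j ∈ range n, j ≠ i₀ → (l j).degree = m),
      ∏ j ∈ range n, MvPowerSeries.coeff (l j) g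
    = ∑ b ∈ (Finset.Iic c).filter (fun b => b.degree = m + 1 ∧ b ≤ c),
        MvPowerSeries.coeff b g *
        ∑ d ∈ (Fintype.piFinset fun _ : Fin (n - 1) => Finset.Iic c).filter
            (fun d => (∀ i, (d i).degree = m) ∧ ∑ i, d i = c - b),
          ∏ i, MvPowerSeries.coeff (d i) g := by
  simp_rw [Finset.mul_sum]
  rw [Finset.sum_sigma']
  apply Finset.sum_nbij' (i := fun l => ⟨l i₀, fun k : Fin (n - 1) => l (skp i₀ ↑k)⟩)
    (j := fun p => psi i₀ p.1 p.2)
  · -- hi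
    intro l hl
    simp only [Finset.mem_filter, Finset.mem_finsuppAntidiag] at hl
    obtain ⟨⟨hsum, hsupp⟩, hdeg₀, hdeg⟩ := hl
    have hle : ∀ j ∈ range n, l j ≤ c := by
      intro j hj
      rw [← hsum]
      exact Finset.single_le_sum (f := fun j => l j) (fun _ _ => zero_le) hj
    have hmem₀ : i₀ ∈ range n := mem_range.mpr hi₀
    simp only [Finset.mem_sigma, Finset.mem_filter, Finset.mem_Iic, Fintype.mem_piFinset]
    refine ⟨⟨hle i₀ hmem₀, hdeg₀, hle i₀ hmem₀⟩, ?_, ?_, ?_⟩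
    · intro k
      exact hle _ (mem_range.mpr (skp_lt hi₀ k.2))
    · intro k
      exact hdeg _ (mem_range.mpr (skp_lt hi₀ k.2)) (skp_ne i₀ k)
    · apply eq_tsub_of_add_eq
      rw [← sum_skp hi₀ (fun j => l j), add_comm, Finset.add_sum_erase _ _ hmem₀, hsum]
  · -- hj
    rintro ⟨b, d⟩ hp
    simp only [Finset.mem_sigma, Finset.mem_filter, Finset.mem_Iic, Fintype.mem_piFinset] at hp
    obtain ⟨⟨hbc, hdegb, -⟩, hdc, hdegd, hdsum⟩ := hp
    simp only [Finset.mem_filter, Finset.mem_finsuppAntidiag]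
    have hself := psi_apply_self (q := q) (n := n) i₀ b d
    refine ⟨⟨?_, ?_⟩, ?_, ?_⟩
    · rw [← Finset.add_sum_erase _ _ (mem_range.mpr hi₀), hself,
        sum_skp hi₀ (fun j => psi i₀ b d j)]
      have : ∀ k : Fin (n - 1), psi i₀ b d (skp i₀ ↑k) = d k := psi_apply_skp i₀ b d
      rw [Finset.sum_congr rfl (fun k _ => this k), hdsum, add_tsub_cancel_of_le hbc]
    · intro j hj
      rw [Finsupp.mem_support_iff] at hj
      rw [mem_range]
      by_contra hjn
      rw [not_lt] at hjn
      exact hj (psi_apply_other i₀ b d (by omega)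
        (fun k => by have := skp_lt hi₀ k.2; omega))
    · rw [hself]; exact hdegb
    · intro j hj hji
      obtain ⟨i, hi, rfl⟩ := skp_surj hi₀ (mem_range.mp hj) hji
      rw [show (i : ℕ) = ((⟨i, hi⟩ : Fin (n - 1)) : ℕ) from rfl, psi_apply_skp]
      exact hdegd _
  · -- left_inv
    intro l hl
    simp only [Finset.mem_filter, Finset.mem_finsuppAntidiag] at hl
    obtain ⟨⟨hsum, hsupp⟩, -, -⟩ := hl
    ext j s
    by_cases hj₀ : j = i₀
    · subst hj₀; rw [psi_apply_self]
    · by_cases hjn : j ∈ range n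
      · obtain ⟨i, hi, rfl⟩ := skp_surj hi₀ (mem_range.mp hjn) hj₀
        rw [show (i : ℕ) = ((⟨i, hi⟩ : Fin (n - 1)) : ℕ) from rfl, psi_apply_skp]
      · rw [psi_apply_other i₀ _ _ hj₀
          (fun k => fun h => hjn (mem_range.mpr (h ▸ skp_lt hi₀ k.2)))]
        rw [Finsupp.notMem_support_iff.mp (fun hmem => hjn (hsupp hmem))]
  · -- right_inv
    rintro ⟨b, d⟩ hp
    refine Sigma.ext ?_ (heq_of_eq ?_)
    · exact psi_apply_self i₀ b d
    · funext k
      exact psi_apply_skp i₀ b d k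
  · -- values
    intro l hl
    rw [← Finset.mul_prod_erase _ _ (mem_range.mpr hi₀), prod_skp hi₀]
end
theorem coeff_order_succ_eq {q n m : ℕ} (hq : 1 ≤ q) (hn : 1 ≤ n)
    (f g : MvPowerSeries (Fin q) ℝ)
    (hord : g.order = (m : ℕ∞)) (hgf : g ^ n = f) :
    ∀ c : Fin q →₀ ℕ, c.degree = m * n + 1 →
      MvPowerSeries.coeff c f =
        (n : ℝ) * ∑ᶠ (b : Fin q →₀ ℕ) (_ : b.degree = m + 1 ∧ b ≤ c),
          MvPowerSeries.coeff b g *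
            ∑ᶠ (d : Fin (n - 1) → (Fin q →₀ ℕ))
              (_ : (∀ i, (d i).degree = m) ∧ ∑ i, d i = c - b),
              ∏ i, MvPowerSeries.coeff (d i) g := by
  classical
  intro c hc
  rw [← hgf, MvPowerSeries.coeff_pow]
  -- Right-hand side: convert the finsums to finite sums
  have hinner : ∀ b : Fin q →₀ ℕ,
      (∑ᶠ (d : Fin (n - 1) → (Fin q →₀ ℕ))
        (_ : (∀ i, (d i).degree = m) ∧ ∑ i, d i = c - b),
        ∏ i, MvPowerSeries.coeff (d i) g)
      = ∑ d ∈ (Fintype.piFinset fun _ : Fin (n - 1) => Finset.Iic c).filter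
            (fun d => (∀ i, (d i).degree = m) ∧ ∑ i, d i = c - b),
          ∏ i, MvPowerSeries.coeff (d i) g := by
    intro b
    apply finsum_cond_eq_sum_of_cond_iff
    intro d _
    simp only [Finset.mem_filter, Fintype.mem_piFinset, Finset.mem_Iic]
    constructor
    · intro hp
      refine ⟨fun i => ?_, hp⟩
      calc d i ≤ ∑ i, d i := Finset.single_le_sum (fun _ _ => zero_le) (mem_univ i)
        _ = c - b := hp.2
        _ ≤ c := tsub_le_self
    · exact And.right
  have houter :
      (∑ᶠ (b : Fin q →₀ ℕ) (_ : b.degree = m + 1 ∧ b ≤ c),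
        MvPowerSeries.coeff b g *
          ∑ᶠ (d : Fin (n - 1) → (Fin q →₀ ℕ))
            (_ : (∀ i, (d i).degree = m) ∧ ∑ i, d i = c - b),
            ∏ i, MvPowerSeries.coeff (d i) g)
      = ∑ b ∈ (Finset.Iic c).filter (fun b => b.degree = m + 1 ∧ b ≤ c),
          MvPowerSeries.coeff b g *
          ∑ d ∈ (Fintype.piFinset fun _ : Fin (n - 1) => Finset.Iic c).filter
              (fun d => (∀ i, (d i).degree = m) ∧ ∑ i, d i = c - b),
            ∏ i, MvPowerSeries.coeff (d i) g := by
    have step1 := finsum_cond_eq_sum_of_cond_iff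
        (t := (Finset.Iic c).filter (fun b => b.degree = m + 1 ∧ b ≤ c))
        (fun b => MvPowerSeries.coeff b g *
          ∑ᶠ (d : Fin (n - 1) → (Fin q →₀ ℕ))
            (_ : (∀ i, (d i).degree = m) ∧ ∑ i, d i = c - b),
            ∏ i, MvPowerSeries.coeff (d i) g)
        (p := fun b => b.degree = m + 1 ∧ b ≤ c)
        (by intro b _
            simp only [Finset.mem_filter, Finset.mem_Iic]
            exact ⟨fun h => ⟨h.2, h⟩, And.right⟩)
    rw [step1]
    exact Finset.sum_congr rfl fun b _ => by beta_reduce; rw [hinner b]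
  rw [houter]
  -- Left-hand side
  set A : ℕ → Finset (ℕ →₀ (Fin q →₀ ℕ)) := fun i₀ =>
    (Finset.finsuppAntidiag (range n) c).filter
      (fun l => (l i₀).degree = m + 1 ∧ ∀ j ∈ range n, j ≠ i₀ → (l j).degree = m)
    with hA
  have hsub : (range n).biUnion A ⊆ Finset.finsuppAntidiag (range n) c := by
    intro l hl
    obtain ⟨i₀, _, hl⟩ := Finset.mem_biUnion.mp hl
    exact (Finset.mem_filter.mp hl).1
  have hvanish : ∀ l ∈ Finset.finsuppAntidiag (range n) c,
      l ∉ (range n).biUnion A → ∏ j ∈ range n, MvPowerSeries.coeff (l j) g = 0 := by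
    intro l hl hnot
    by_contra hne
    have hfac := Finset.prod_ne_zero_iff.mp hne
    have hm : ∀ j ∈ range n, m ≤ (l j).degree := by
      intro j hj
      have h1 := MvPowerSeries.order_le (hfac j hj)
      rw [hord] at h1
      exact_mod_cast h1
    obtain ⟨hsum, hsupp⟩ := Finset.mem_finsuppAntidiag.mp hl
    have hdegsum : ∑ j ∈ range n, (l j).degree = m * n + 1 := by
      rw [← degree_finsum (range n) (fun j => l j), hsum, hc]
    have h2 : ∑ j ∈ range n, ((l j).degree - m) = 1 := by
      have h3 : ∑ j ∈ range n, (l j).degree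
          = ∑ j ∈ range n, (m + ((l j).degree - m)) :=
        Finset.sum_congr rfl fun j hj => by have := hm j hj; omega
      rw [h3, Finset.sum_add_distrib, Finset.sum_const, card_range, smul_eq_mul,
        Nat.mul_comm n m] at hdegsum
      omega
    obtain ⟨i₀, hi₀, h1, h0⟩ := sum_nat_eq_one h2
    apply hnot
    apply Finset.mem_biUnion.mpr
    refine ⟨i₀, hi₀, Finset.mem_filter.mpr ⟨hl, ?_, ?_⟩⟩
    · have := hm i₀ hi₀; omega
    · intro j hj hji
      have := hm j hj
      have := h0 j hj hji
      omega
  have hdisj : (↑(range n) : Set ℕ).PairwiseDisjoint A := by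
    intro i₀ hi₀ i₁ hi₁ hne
    simp only [Function.onFun]
    refine Finset.disjoint_left.mpr ?_
    intro l hl₀ hl₁
    rw [Finset.mem_coe, mem_range] at hi₀ hi₁
    obtain ⟨-, -, hall⟩ := Finset.mem_filter.mp hl₀
    obtain ⟨-, hd1, -⟩ := Finset.mem_filter.mp hl₁
    have := hall i₁ (mem_range.mpr hi₁) (Ne.symm hne)
    omega
  rw [← Finset.sum_subset hsub hvanish, Finset.sum_biUnion hdisj]
  rw [Finset.sum_congr rfl (fun i₀ hi₀ => key g c (mem_range.mp hi₀)),
    Finset.sum_const, card_range, nsmul_eq_mul]
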